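/- Let W be a standard one-dimensional Brownian motion and let f : [0,∞) × ℝ → ℝ be a measurable, strictly positive function such that for all 0 ≤ s ≤ t, almost surely f(s, W_s) · f(t − s, W_t − W_s) = f(t, W_t). Then for every t > 0 the random variable log f(t, W_t) has a Gaussian distribution: there exist m ∈ ℝ and σ² ≥ 0 such that the law of log f(t, W_t) is the (possibly degenerate) normal distribution with mean m and variance σ². -/

import Mathlib

open MeasureTheory ProbabilityTheory Real Filter
open scoped NNReal ENNReal

noncomputable section

variable {Ω : Type*} [mΩ : MeasurableSpace Ω]

/-- The σ-algebra generated by the process `W` up to time `t`. -/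
def natSigma (W : ℝ → Ω → ℝ) (t : ℝ) : MeasurableSpace Ω :=
  ⨆ s ∈ Set.Icc (0 : ℝ) t, MeasurableSpace.comap (W s) inferInstance

/-- `W` is a standard one-dimensional Brownian motion under `P`. -/
structure IsStandardBM (P : Measure Ω) (W : ℝ → Ω → ℝ) : Prop where
  isProb : IsProbabilityMeasure P
  init : ∀ ω, W 0 ω = 0
  cont : ∀ ω, Continuous fun t => W t ω
  meas : ∀ t, Measurable (W t)
  gauss : ∀ s t : ℝ, 0 ≤ s → s ≤ t →
    P.map (fun ω => W t ω - W s ω) = gaussianReal 0 (Real.toNNReal (t - s))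
  indep : ∀ s t : ℝ, 0 ≤ s → s ≤ t →
    Indep (MeasurableSpace.comap (fun ω => W t ω - W s ω) inferInstance) (natSigma W s) P

/-- The natural filtration of the process `W`, indexed by nonnegative times. -/
def natFiltration (W : ℝ → Ω → ℝ) (hW : ∀ t, Measurable (W t)) :
    Filtration ℝ≥0 mΩ where
  seq t := natSigma W (t : ℝ)
  mono' s t hst := biSup_mono fun u hu => ⟨hu.1, hu.2.trans (NNReal.coe_le_coe.mpr hst)⟩
  le' t := iSup₂_le fun s _ => measurable_iff_comap_le.mp (hW s)


lemma additive_bounded_linear (c : ℝ → ℝ) (hadd : ∀ a b, c (a + b) = c a + c b)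
    {M δ : ℝ} (hδ : 0 < δ) (hb : ∀ a, |a| ≤ δ → |c a| ≤ M) :
    ∀ x, c x = c 1 * x := by
  have hc0 : c 0 = 0 := by have := hadd 0 0; simp at this; linarith
  have hM : 0 ≤ M := by simpa [hc0, abs_of_nonneg, le_refl] using hb 0 (by simp [hδ.le])
  let φ : ℝ →+ ℝ := AddMonoidHom.mk' c hadd
  have hrat : ∀ q : ℚ, c (q : ℝ) = (q : ℝ) * c 1 := by
    intro q
    have h := map_ratCast_smul φ ℝ ℝ q (1 : ℝ)
    simpa [smul_eq_mul, φ] using h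
  intro x
  set d := c x - c 1 * x with hd
  have key : ∀ n : ℕ, 0 < n → |d| ≤ (M + δ * |c 1|) / n := by
    intro n hn0
    have hn0' : (0 : ℝ) < n := by exact_mod_cast hn0
    obtain ⟨q, hq⟩ := exists_rat_near x (div_pos hδ hn0')
    have h1 : c x = c q + c (x - q) := by
      rw [← hadd]; ring_nf
    have hns : c ((n : ℕ) • (x - q)) = (n : ℕ) • c (x - q) := map_nsmul φ _ _
    have hns' : c ((n : ℝ) * (x - q)) = (n : ℝ) * c (x - q) := by
      simpa [nsmul_eq_mul] using hns
    have hxq : |(n : ℝ) * (x - q)| ≤ δ := by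
      rw [abs_mul, abs_of_nonneg hn0'.le]
      calc (n : ℝ) * |x - q| ≤ (n : ℝ) * (δ / n) := by
            exact mul_le_mul_of_nonneg_left hq.le hn0'.le
        _ = δ := by field_simp
    have h2 : |c (x - q)| ≤ M / n := by
      have := hb _ hxq
      rw [hns', abs_mul, abs_of_nonneg hn0'.le] at this
      rw [le_div_iff₀ hn0']
      linarith [this]
    have h3 : |(q : ℝ) - x| ≤ δ / n := by
      rw [abs_sub_comm]; exact hq.le
    have : d = c (x - q) + ((q : ℝ) - x) * c 1 := by
      rw [hd, h1, hrat]; ring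
    rw [this]
    calc |c (x - q) + ((q : ℝ) - x) * c 1| ≤ |c (x - q)| + |((q : ℝ) - x)| * |c 1| := by
          refine (abs_add_le _ _).trans ?_
          rw [abs_mul]
      _ ≤ M / n + (δ / n) * |c 1| := by
          gcongr
      _ = (M + δ * |c 1|) / n := by ring
  by_contra hne
  have hdpos : 0 < |d| := by
    rcases lt_or_eq_of_le (abs_nonneg d) with h | h
    · exact h
    · exfalso; exact hne (by nlinarith [abs_eq_zero.mp h.symm, sub_eq_zero.mp (abs_eq_zero.mp h.symm)])
  obtain ⟨n, hn⟩ := exists_nat_gt ((M + δ * |c 1|) / |d|)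
  have hn0 : 0 < n := by
    by_contra h
    push_neg at h
    interval_cases n
    push_cast at hn
    exact absurd hn (not_lt.mpr (div_nonneg (add_nonneg hM (mul_nonneg hδ.le (abs_nonneg _))) hdpos.le))
  have h1 := key n hn0
  have hn0' : (0 : ℝ) < n := by exact_mod_cast hn0
  rw [div_lt_iff₀ hdpos] at hn
  rw [le_div_iff₀ hn0'] at h1
  nlinarith

lemma ae_cauchy_linear (h G : ℝ → ℝ) (hh : Measurable h) (hG : Measurable G)
    (heq : ∀ᵐ p ∂(volume : Measure (ℝ × ℝ)), h p.1 + h p.2 = G (p.1 + p.2)) :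
    ∃ c d : ℝ, ∀ᵐ z ∂(volume : Measure ℝ), G z = c * z + d := by
  rw [Measure.volume_eq_prod] at heq
  have hGood : ∀ᵐ x ∂(volume : Measure ℝ), ∀ᵐ y ∂(volume : Measure ℝ), h x + h y = G (x + y) :=
    Measure.ae_ae_of_ae_prod heq
  set Good := {x : ℝ | ∀ᵐ y ∂(volume : Measure ℝ), h x + h y = G (x + y)} with hGoodDef
  have key : ∀ x₁ x₂, x₁ ∈ Good → x₂ ∈ Good →
      ∀ᵐ z ∂(volume : Measure ℝ), G (z + (x₁ - x₂)) - G z = h x₁ - h x₂ := by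
    intro x₁ x₂ hx₁ hx₂
    have mp : MeasurePreserving (fun z : ℝ => z + (-x₂)) volume volume :=
      measurePreserving_add_right volume (-x₂)
    have h1 : ∀ᵐ z ∂(volume : Measure ℝ), h x₁ + h (z + -x₂) = G (x₁ + (z + -x₂)) :=
      mp.quasiMeasurePreserving.tendsto_ae.eventually hx₁
    have h2 : ∀ᵐ z ∂(volume : Measure ℝ), h x₂ + h (z + -x₂) = G (x₂ + (z + -x₂)) :=
      mp.quasiMeasurePreserving.tendsto_ae.eventually hx₂
    filter_upwards [h1, h2] with z e1 e2
    have ha : x₂ + (z + -x₂) = z := by ring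
    have hb : x₁ + (z + -x₂) = z + (x₁ - x₂) := by ring
    rw [ha] at e2; rw [hb] at e1
    linarith
  have exist_pair : ∀ a : ℝ, ∃ x₁, x₁ ∈ Good ∧ x₁ - a ∈ Good := by
    intro a
    have mp : MeasurePreserving (fun z : ℝ => z - a) volume volume := by
      simpa [sub_eq_add_neg] using measurePreserving_add_right (volume : Measure ℝ) (-a)
    have h2 : ∀ᵐ x ∂(volume : Measure ℝ), (x - a) ∈ Good :=
      mp.quasiMeasurePreserving.tendsto_ae.eventually hGood
    exact (hGood.and h2).exists
  choose ξ hξ1 hξ2 using exist_pair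
  set c : ℝ → ℝ := fun a => h (ξ a) - h (ξ a - a) with hcdef
  have hc : ∀ a, ∀ᵐ z ∂(volume : Measure ℝ), G (z + a) - G z = c a := by
    intro a
    have := key (ξ a) (ξ a - a) (hξ1 a) (hξ2 a)
    simpa [sub_sub_cancel] using this
  have uniq : ∀ (a c₁ : ℝ), (∀ᵐ z ∂(volume : Measure ℝ), G (z + a) - G z = c₁) → c₁ = c a := by
    intro a c₁ h1
    obtain ⟨z, hz1, hz2⟩ := (h1.and (hc a)).exists
    linarith
  have hadd : ∀ a b, c (a + b) = c a + c b := by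
    intro a b
    have mpb : MeasurePreserving (fun z : ℝ => z + b) volume volume :=
      measurePreserving_add_right volume b
    have h1 : ∀ᵐ z ∂(volume : Measure ℝ), G ((z + b) + a) - G (z + b) = c a :=
      mpb.quasiMeasurePreserving.tendsto_ae.eventually (hc a)
    have h3 : ∀ᵐ z ∂(volume : Measure ℝ), G (z + (a + b)) - G z = c a + c b := by
      filter_upwards [h1, hc b] with z e1 e2
      have : z + b + a = z + (a + b) := by ring
      rw [this] at e1; linarith
    exact (uniq _ _ h3).symm
  -- boundedness of c near 0
  obtain ⟨M, hM⟩ : ∃ n : ℕ, ENNReal.ofReal (7/4) < volume (Set.Icc (-1:ℝ) 1 ∩ {x | |h x| ≤ (n : ℝ)}) := by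
    have hmono : Monotone (fun n : ℕ => Set.Icc (-1:ℝ) 1 ∩ {x | |h x| ≤ (n : ℝ)}) := by
      intro m n hmn x hx
      refine ⟨hx.1, ?_⟩
      have hmn' : (m : ℝ) ≤ n := by exact_mod_cast hmn
      exact le_trans hx.2 hmn'
    have hunion : ⋃ n : ℕ, (Set.Icc (-1:ℝ) 1 ∩ {x | |h x| ≤ (n:ℝ)}) = Set.Icc (-1:ℝ) 1 := by
      ext x
      simp only [Set.mem_iUnion, Set.mem_inter_iff, Set.mem_setOf_eq]
      constructor
      · rintro ⟨n, hx, _⟩; exact hx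
      · intro hx
        obtain ⟨n, hn⟩ := exists_nat_ge |h x|
        exact ⟨n, hx, hn⟩
    have ht := tendsto_measure_iUnion_atTop (μ := (volume : Measure ℝ)) hmono
    rw [hunion] at ht
    have hlt : ENNReal.ofReal (7/4) < volume (Set.Icc (-1:ℝ) 1) := by
      rw [Real.volume_Icc]
      exact (ENNReal.ofReal_lt_ofReal_iff (by norm_num)).mpr (by norm_num)
    exact (ht.eventually (lt_mem_nhds hlt)).exists
  set E := Set.Icc (-1:ℝ) 1 ∩ {x | |h x| ≤ (M : ℝ)} with hEdef
  have hEmeas : MeasurableSet E :=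
    measurableSet_Icc.inter (measurableSet_le hh.abs measurable_const)
  have hbound : ∀ a : ℝ, |a| ≤ 1/2 → |c a| ≤ 2 * M := by
    intro a ha
    have mp : MeasurePreserving (fun z : ℝ => z - a) volume volume := by
      simpa [sub_eq_add_neg] using measurePreserving_add_right (volume : Measure ℝ) (-a)
    have hvol2 : volume ((fun z : ℝ => z - a) ⁻¹' E) = volume E :=
      mp.measure_preimage hEmeas.nullMeasurableSet
    have habs := abs_le.mp ha
    have hsub : E ∪ (fun z : ℝ => z - a) ⁻¹' E ⊆ Set.Icc (-(3/2) : ℝ) (3/2) := by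
      rintro x (hx | hx)
      · obtain ⟨h1, h2⟩ := Set.mem_Icc.mp hx.1
        exact Set.mem_Icc.mpr ⟨by linarith, by linarith⟩
      · simp only [Set.mem_preimage] at hx
        obtain ⟨h1, h2⟩ := Set.mem_Icc.mp hx.1
        exact Set.mem_Icc.mpr ⟨by linarith, by linarith⟩
    have hUnionVol : volume (E ∪ (fun z:ℝ => z - a) ⁻¹' E) ≤ ENNReal.ofReal 3 := by
      refine (measure_mono hsub).trans ?_
      rw [Real.volume_Icc]
      exact ENNReal.ofReal_le_ofReal (by norm_num)
    have hie := measure_union_add_inter (μ := (volume : Measure ℝ)) E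
      (hEmeas.preimage mp.measurable)
    have hpos : volume (E ∩ (fun z:ℝ => z - a) ⁻¹' E) ≠ 0 := by
      intro hz
      rw [hz, add_zero, hvol2] at hie
      have h74 : ENNReal.ofReal (7/4) + ENNReal.ofReal (7/4) ≤ volume E + volume E := by
        exact add_le_add hM.le hM.le
      rw [← hie] at h74
      have h3 : ENNReal.ofReal (7/4) + ENNReal.ofReal (7/4) ≤ ENNReal.ofReal 3 :=
        h74.trans hUnionVol
      rw [← ENNReal.ofReal_add (by norm_num) (by norm_num)] at h3
      have h4 := (ENNReal.ofReal_le_ofReal_iff (by norm_num)).mp h3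
      norm_num at h4
    have hGa : ∀ᵐ x ∂(volume : Measure ℝ), x ∈ Good ∧ (x - a) ∈ Good :=
      hGood.and (mp.quasiMeasurePreserving.tendsto_ae.eventually hGood)
    obtain ⟨x, hxmem, hxg⟩ : ∃ x, x ∈ E ∩ (fun z:ℝ => z - a) ⁻¹' E ∧ (x ∈ Good ∧ (x - a) ∈ Good) := by
      by_contra hcon
      push_neg at hcon
      have hsubnull : (E ∩ (fun z:ℝ => z - a)⁻¹' E) ⊆ {x | ¬(x ∈ Good ∧ (x - a) ∈ Good)} :=
        fun x hx hx2 => hcon x hx hx2.1 hx2.2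
      exact hpos (measure_mono_null hsubnull (by simpa [ae_iff] using hGa))
    have hca : h x - h (x - a) = c a := by
      refine uniq a _ ?_
      have := key x (x - a) hxg.1 hxg.2
      simpa [sub_sub_cancel] using this
    rw [← hca]
    have h1 : |h x| ≤ M := hxmem.1.2
    have h2 : |h (x - a)| ≤ M := hxmem.2.2
    calc |h x - h (x - a)| ≤ |h x| + |h (x - a)| := abs_sub _ _
      _ ≤ 2 * M := by linarith
  have hlin := additive_bounded_linear c hadd (by norm_num : (0:ℝ) < 1/2) hbound
  set c1 := c 1 with hc1
  have hc' : ∀ᵐ a ∂(volume : Measure ℝ), ∀ᵐ z ∂(volume : Measure ℝ),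
      G (z + a) - G z = c1 * a := by
    refine ae_of_all _ (fun a => ?_)
    have := hc a
    rw [hlin a] at this
    exact this
  have hmeasset : MeasurableSet {p : ℝ × ℝ | G (p.2 + p.1) - G p.2 = c1 * p.1} := by
    have h1 : Measurable (fun p : ℝ × ℝ => G (p.2 + p.1) - G p.2) :=
      (hG.comp (measurable_snd.add measurable_fst)).sub (hG.comp measurable_snd)
    have h2 : Measurable (fun p : ℝ × ℝ => c1 * p.1) := measurable_fst.const_mul c1
    exact measurableSet_eq_fun h1 h2
  have hswap := (Measure.ae_ae_comm hmeasset).mp hc'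
  obtain ⟨z₀, hz₀⟩ := hswap.exists
  refine ⟨c1, G z₀ - c1 * z₀, ?_⟩
  have mp0 : MeasurePreserving (fun w : ℝ => w - z₀) volume volume := by
    simpa [sub_eq_add_neg] using measurePreserving_add_right (volume : Measure ℝ) (-z₀)
  have hfin : ∀ᵐ w ∂(volume : Measure ℝ), G (z₀ + (w - z₀)) - G z₀ = c1 * (w - z₀) :=
    mp0.quasiMeasurePreserving.tendsto_ae.eventually hz₀
  filter_upwards [hfin] with w hw
  have hzz : z₀ + (w - z₀) = w := by ring
  rw [hzz] at hw
  have : c1 * (w - z₀) = c1 * w - c1 * z₀ := by ring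
  linarith

/-- Under the a.s. multiplicative identity along Brownian motion,
`log f (t, W t)` is Gaussian (possibly degenerate) for every `t > 0`. -/
theorem stmt10 (P : Measure Ω) (W : ℝ → Ω → ℝ) (hBM : IsStandardBM P W)
    (f : ℝ → ℝ → ℝ)
    (hmeas : Measurable (Function.uncurry f))
    (hpos : ∀ u v : ℝ, 0 ≤ u → 0 < f u v)
    (hfe : ∀ s t : ℝ, 0 ≤ s → s ≤ t →
      ∀ᵐ ω ∂P, f s (W s ω) * f (t - s) (W t ω - W s ω) = f t (W t ω)) :
    ∀ t : ℝ, 0 < t → ∃ (m : ℝ) (v : ℝ≥0),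
      P.map (fun ω => Real.log (f t (W t ω))) = gaussianReal m v := by
  intro t ht
  haveI hPP : IsProbabilityMeasure P := hBM.isProb
  set s : ℝ := t / 2 with hsdef
  have hs : 0 < s := by positivity
  have hs0 : (0 : ℝ) ≤ s := hs.le
  have hst : s ≤ t := by rw [hsdef]; linarith
  have hts : t - s = s := by rw [hsdef]; ring
  set X : Ω → ℝ := W s with hXdef
  set Y : Ω → ℝ := fun ω => W t ω - W s ω with hYdef
  have hXm : Measurable X := hBM.meas s
  have hYm : Measurable Y := (hBM.meas t).sub (hBM.meas s)
  set σ : ℝ≥0 := Real.toNNReal s with hσdef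
  have hσ : σ ≠ 0 := by
    rw [hσdef]
    exact (Real.toNNReal_pos.mpr hs).ne'
  -- law of X
  have hXlaw : P.map X = gaussianReal 0 σ := by
    have h := hBM.gauss 0 s le_rfl hs0
    have hfun : (fun ω => W s ω - W 0 ω) = X := by
      funext ω; rw [hBM.init ω, sub_zero]
    rw [hfun] at h
    rw [h, sub_zero]
  -- law of Y
  have hYlaw : P.map Y = gaussianReal 0 σ := by
    have h := hBM.gauss s t hs0 hst
    rw [hts] at h
    exact h
  -- independence
  have hIndep : IndepFun X Y P := by
    have h := hBM.indep s t hs0 hst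
    have hle : MeasurableSpace.comap X inferInstance ≤ natSigma W s :=
      le_biSup (fun u => MeasurableSpace.comap (W u) inferInstance)
        (Set.mem_Icc.mpr ⟨hs0, le_refl s⟩)
    have h2 : Indep (MeasurableSpace.comap X inferInstance)
        (MeasurableSpace.comap Y inferInstance) P :=
      (indep_of_indep_of_le_right h hle).symm
    exact h2
  have hpair : Measurable fun ω => (X ω, Y ω) := hXm.prodMk hYm
  have hmap : P.map (fun ω => (X ω, Y ω)) = (gaussianReal 0 σ).prod (gaussianReal 0 σ) := by
    have h := (indepFun_iff_map_prod_eq_prod_map_map hXm.aemeasurable hYm.aemeasurable).mp hIndep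
    rw [hXlaw, hYlaw] at h
    exact h
  -- measurability of the log functions
  have hgmeas : ∀ u : ℝ, Measurable fun x : ℝ => Real.log (f u x) := by
    intro u
    have : Measurable fun x : ℝ => f u x :=
      hmeas.comp (measurable_const.prodMk measurable_id)
    exact Real.measurable_log.comp this
  set A : Set (ℝ × ℝ) :=
    {p : ℝ × ℝ | Real.log (f s p.1) + Real.log (f s p.2) = Real.log (f t (p.1 + p.2))} with hAdef
  have hA : MeasurableSet A := by
    have h1 : Measurable fun p : ℝ × ℝ => Real.log (f s p.1) + Real.log (f s p.2) :=
      ((hgmeas s).comp measurable_fst).add ((hgmeas s).comp measurable_snd)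
    have h2 : Measurable fun p : ℝ × ℝ => Real.log (f t (p.1 + p.2)) :=
      (hgmeas t).comp (measurable_fst.add measurable_snd)
    exact measurableSet_eq_fun h1 h2
  have hae : ∀ᵐ ω ∂P, (X ω, Y ω) ∈ A := by
    filter_upwards [hfe s t hs0 hst] with ω hω
    rw [hts] at hω
    have hXY : X ω + Y ω = W t ω := by rw [hXdef, hYdef]; ring
    have h1 : f s (X ω) ≠ 0 := (hpos s _ hs0).ne'
    have h2 : f s (Y ω) ≠ 0 := (hpos s _ hs0).ne'
    show Real.log (f s (X ω)) + Real.log (f s (Y ω)) = Real.log (f t (X ω + Y ω))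
    rw [hXY, ← Real.log_mul h1 h2, hω]
  have hAc : ((gaussianReal 0 σ).prod (gaussianReal 0 σ)) Aᶜ = 0 := by
    rw [← hmap, Measure.map_apply hpair hA.compl]
    have h' := ae_iff.mp hae
    convert h' using 1
    rfl
  have hvolAc : ((volume : Measure ℝ).prod volume) Aᶜ = 0 := by
    have hac : (volume : Measure ℝ).prod volume ≪ (gaussianReal 0 σ).prod (gaussianReal 0 σ) :=
      Measure.AbsolutelyContinuous.prod (gaussianReal_absolutelyContinuous' 0 hσ)
        (gaussianReal_absolutelyContinuous' 0 hσ)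
    exact hac hAc
  have heqvol : ∀ᵐ p ∂(volume : Measure (ℝ × ℝ)),
      Real.log (f s p.1) + Real.log (f s p.2) = Real.log (f t (p.1 + p.2)) := by
    rw [Measure.volume_eq_prod]
    rw [ae_iff]
    convert hvolAc using 1
    rfl
  obtain ⟨c, d, hline⟩ := ae_cauchy_linear (fun x => Real.log (f s x)) (fun z => Real.log (f t z))
    (hgmeas s) (hgmeas t) heqvol
  -- law of W t
  have hWtlaw : P.map (W t) = gaussianReal 0 (Real.toNNReal t) := by
    have h := hBM.gauss 0 t le_rfl ht.le
    have hfun : (fun ω => W t ω - W 0 ω) = W t := by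
      funext ω; rw [hBM.init ω, sub_zero]
    rw [hfun, sub_zero] at h
    exact h
  have htne : Real.toNNReal t ≠ 0 := (Real.toNNReal_pos.mpr ht).ne'
  have hline' : ∀ᵐ z ∂(P.map (W t)), Real.log (f t z) = c * z + d := by
    rw [hWtlaw]
    exact hline.filter_mono (gaussianReal_absolutelyContinuous 0 htne).ae_le
  have hPae : ∀ᵐ ω ∂P, Real.log (f t (W t ω)) = c * W t ω + d :=
    ae_of_ae_map (hBM.meas t).aemeasurable hline'
  refine ⟨d, ⟨c ^ 2, sq_nonneg c⟩ * Real.toNNReal t, ?_⟩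
  have hmc : Measurable fun x : ℝ => c * x := measurable_id.const_mul c
  have had : Measurable fun x : ℝ => x + d := measurable_id.add_const d
  calc P.map (fun ω => Real.log (f t (W t ω)))
      = P.map (fun ω => c * W t ω + d) := Measure.map_congr hPae
    _ = ((P.map (W t)).map (fun x => c * x)).map (fun x => x + d) := by
        rw [Measure.map_map had hmc, Measure.map_map (had.comp hmc) (hBM.meas t)]
        rfl
    _ = gaussianReal d (⟨c ^ 2, sq_nonneg c⟩ * Real.toNNReal t) := by
        rw [hWtlaw]
        rw [show (fun x : ℝ => c * x) = (c * ·) from rfl, gaussianReal_map_const_mul c]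
        rw [show (fun x : ℝ => x + d) = (· + d) from rfl, gaussianReal_map_add_const d]
        norm_num
        rfl

end
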